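/- Let n ≥ 5 be an integer and define (d_k) by d_0 = 1, d_1 = n−1, d_{k+1} = (n−2)·d_k − d_{k−1} for k ≥ 1. Then in the ring of formal power series ℝ⟦X⟧ one has (1 − X)·((1+X)² − (n−2)²X) · ∑_{k≥0} d_k² X^k = (1+X)² + 2(n−2)X. -/

import Mathlib

open PowerSeries

theorem stmt_12 (n : ℕ) (hn : 5 ≤ n) (d : ℕ → ℕ)
    (h0 : d 0 = 1) (h1 : d 1 = n - 1)
    (hrec : ∀ k : ℕ, 1 ≤ k → d (k + 1) + d (k - 1) = (n - 2) * d k) :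
    (1 - PowerSeries.X) *
        ((1 + PowerSeries.X) ^ 2 - PowerSeries.C (((n : ℝ) - 2) ^ 2) * PowerSeries.X) *
        PowerSeries.mk (fun k => ((d k : ℝ)) ^ 2)
      = (1 + PowerSeries.X) ^ 2 + PowerSeries.C (2 * ((n : ℝ) - 2)) * PowerSeries.X := by
  have h2n : (2:ℕ) ≤ n := by omega
  set c : ℝ := (n : ℝ) - 2 with hc
  set S : ℝ⟦X⟧ := PowerSeries.mk (fun k => ((d k : ℝ)) ^ 2) with hS
  have hD : ∀ k : ℕ, ((d (k+2) : ℝ)) = c * d (k+1) - d k := by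
    intro k
    have := hrec (k+1) (by omega)
    have h' : ((d (k+2) : ℝ)) + d k = ((n:ℕ) - 2 : ℕ) * d (k+1) := by
      exact_mod_cast congrArg (Nat.cast : ℕ → ℝ) this
    rw [Nat.cast_sub h2n] at h'
    rw [hc]; push_cast at h' ⊢; linarith
  have hd1 : ((d 1 : ℝ)) = c + 1 := by
    rw [h1, hc, Nat.cast_sub (by omega : 1 ≤ n)]; push_cast; ring
  have key : (1 - PowerSeries.X) *
        ((1 + PowerSeries.X) ^ 2 - PowerSeries.C (c ^ 2) * PowerSeries.X) * S
      = PowerSeries.C (1:ℝ) * (PowerSeries.X ^ 0 * S)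
          + PowerSeries.C (1 - c^2) * (PowerSeries.X ^ 1 * S)
          + PowerSeries.C (c^2 - 1) * (PowerSeries.X ^ 2 * S)
          + PowerSeries.C (-1:ℝ) * (PowerSeries.X ^ 3 * S) := by
    simp only [map_sub, map_one, map_pow, map_neg]
    ring
  have hR : (1 + PowerSeries.X) ^ 2 + PowerSeries.C (2 * c) * PowerSeries.X
      = PowerSeries.C (1:ℝ) * PowerSeries.X ^ 0 + PowerSeries.C (2 + 2*c) * PowerSeries.X ^ 1
          + PowerSeries.C (1:ℝ) * PowerSeries.X ^ 2 := by
    simp only [map_add, map_mul, map_one, map_ofNat]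
    ring
  rw [key, hR]
  obtain ⟨a, ha⟩ : ∃ a : ℝ, a = 1 - c^2 := ⟨_, rfl⟩
  obtain ⟨b, hb⟩ : ∃ b : ℝ, b = c^2 - 1 := ⟨_, rfl⟩
  obtain ⟨r, hr⟩ : ∃ r : ℝ, r = 2 + 2*c := ⟨_, rfl⟩
  rw [← ha, ← hb, ← hr]
  ext k
  simp only [map_add, PowerSeries.coeff_C_mul, PowerSeries.coeff_X_pow_mul',
    PowerSeries.coeff_X_pow, hS, PowerSeries.coeff_mk]
  subst ha hb hr
  match k with
  | 0 => norm_num [h0]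
  | 1 => norm_num [h0, hd1]; ring
  | 2 =>
      have h2 : ((d 2 : ℝ)) = c * (c+1) - 1 := by rw [hD 0, hd1, h0]; push_cast; ring
      norm_num [h0, hd1, h2]; ring
  | (m+3) =>
      have e1 : ((d (m+3) : ℝ)) = c * d (m+2) - d (m+1) := hD (m+1)
      have e2 : ((d m : ℝ)) = c * d (m+1) - d (m+2) := by have := hD m; linarith
      have t3 : 3 ≤ m + 3 := by omega
      have t2 : 2 ≤ m + 3 := by omega
      have t1 : 1 ≤ m + 3 := by omega
      simp only [if_pos t3, if_pos t2, if_pos t1, if_neg (by omega : ¬ (m+3 = 0)),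
        if_neg (by omega : ¬ (m+3 = 1)), if_neg (by omega : ¬ (m+3 = 2))]
      norm_num
      rw [show m+3-2 = m+1 from rfl, e1, e2]
      ring
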